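/- arXiv:math/0310086 — 3 statements merged into one kernel-verified Lean document; each statement's English description precedes it below -/
import Mathlib

section
/- If F is a rotation-invariant polynomial function on the space of real d×d symmetric matrices (i.e., F(gxg⁻¹)=F(x) for all orthogonal g), then there exists a polynomial p in d variables such that F(x) = p(Trace(x), Trace(x²), ..., Trace(x^d)) for all symmetric x. -/
open Matrix MvPolynomial

noncomputable def psumHom (d : ℕ) : MvPolynomial (Fin d) ℝ →ₐ[ℝ] MvPolynomial (Fin d) ℝ :=
  aeval (fun j : Fin d => psum (Fin d) ℝ ((j : ℕ) + 1))

lemma psum_mem_psum_range (d : ℕ) (m : ℕ) (hm1 : 1 ≤ m) (hmd : m ≤ d) :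
    psum (Fin d) ℝ m ∈ (psumHom d).range := by
  have h1 : ((⟨m - 1, by omega⟩ : Fin d) : ℕ) + 1 = m := by simp; omega
  have h2 : psumHom d (X ⟨m - 1, by omega⟩) = psum (Fin d) ℝ m := by
    rw [psumHom, aeval_X, h1]
  exact ⟨_, h2⟩

lemma esymm_mem_psum_range (d : ℕ) (k : ℕ) (hk : k ≤ d) :
    esymm (Fin d) ℝ k ∈ (psumHom d).range := by
  induction k using Nat.strong_induction_on with
  | _ k ih =>
    rcases Nat.eq_zero_or_pos k with h0 | hp
    · subst h0
      rw [esymm_zero]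
      exact one_mem _
    · have hmul := mul_esymm_eq_sum (Fin d) ℝ k
      have hkne : (k : ℝ) ≠ 0 := Nat.cast_ne_zero.mpr hp.ne'
      have hE : esymm (Fin d) ℝ k = C (k : ℝ)⁻¹ * ((-1) ^ (k + 1) *
          ∑ a ∈ Finset.HasAntidiagonal.antidiagonal k with a.1 < k,
            (-1) ^ a.1 * esymm (Fin d) ℝ a.1 * psum (Fin d) ℝ a.2) := by
        rw [← hmul, ← mul_assoc, ← C_eq_coe_nat, ← C_mul, inv_mul_cancel₀ hkne, C_1, one_mul]
      rw [hE]
      refine mul_mem ⟨C (k:ℝ)⁻¹, by simp [psumHom]⟩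
        (mul_mem (pow_mem (neg_mem (one_mem _)) _) (Subalgebra.sum_mem _ ?_))
      intro a ha
      simp only [Finset.mem_filter, Finset.HasAntidiagonal.mem_antidiagonal] at ha
      refine mul_mem (mul_mem (pow_mem (neg_mem (one_mem _)) _) (ih a.1 ha.2 (by omega))) ?_
      exact psum_mem_psum_range d a.2 (by omega) (by omega)

lemma aeval_esymm_mem_psum_range (d : ℕ) (q : MvPolynomial (Fin d) ℝ) :
    aeval (fun i : Fin d => esymm (Fin d) ℝ ((i : ℕ) + 1)) q ∈ (psumHom d).range := by
  induction q using MvPolynomial.induction_on with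
  | C r => simpa using (psumHom d).range.algebraMap_mem r
  | add p q hp hq => rw [map_add]; exact add_mem hp hq
  | mul_X p i hp =>
    rw [_root_.map_mul, aeval_X]
    exact mul_mem hp (esymm_mem_psum_range d (i + 1) (by omega))

lemma isSymmetric_mem_psum_range (d : ℕ) (Q : MvPolynomial (Fin d) ℝ) (hQ : Q.IsSymmetric) :
    ∃ p : MvPolynomial (Fin d) ℝ, Q = psumHom d p := by
  obtain ⟨q, hq⟩ := esymmAlgHom_surjective (σ := Fin d) ℝ (n := d) (by simp)
    ⟨Q, (mem_symmetricSubalgebra Q).mpr hQ⟩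
  have hQ' : Q = aeval (fun i : Fin d => esymm (Fin d) ℝ ((i : ℕ) + 1)) q := by
    rw [← esymmAlgHom_apply, hq]
  obtain ⟨p, hp⟩ := aeval_esymm_mem_psum_range d q
  exact ⟨p, by rw [hQ', ← hp]; rfl⟩

lemma perm_conj (d : ℕ) (e : Equiv.Perm (Fin d)) (v : Fin d → ℝ) :
    ∃ g : Matrix (Fin d) (Fin d) ℝ, g * gᵀ = 1 ∧ g * diagonal v * gᵀ = diagonal (v ∘ e) := by
  refine ⟨of fun i k => if k = e i then 1 else 0, ?_, ?_⟩
  · ext i j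
    simp [mul_apply, one_apply, ite_and, Equiv.apply_eq_iff_eq, eq_comm]
  · ext i j
    simp [mul_apply, diagonal_apply, ite_and, Finset.sum_ite_eq, Equiv.apply_eq_iff_eq, eq_comm]
    split <;> simp_all

lemma spectral (d : ℕ) (x : Matrix (Fin d) (Fin d) ℝ) (hx : x.IsSymm) :
    ∃ (g : Matrix (Fin d) (Fin d) ℝ) (v : Fin d → ℝ),
      g * gᵀ = 1 ∧ x = g * diagonal v * gᵀ := by
  have hA : x.IsHermitian := by
    rwa [Matrix.IsHermitian, conjTranspose_eq_transpose_of_trivial]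
  refine ⟨hA.eigenvectorUnitary, hA.eigenvalues, ?_, ?_⟩
  · have := (Matrix.mem_unitaryGroup_iff).mp hA.eigenvectorUnitary.2
    simpa [star_eq_conjTranspose, conjTranspose_eq_transpose_of_trivial] using this
  · have := hA.spectral_theorem
    simpa [star_eq_conjTranspose, conjTranspose_eq_transpose_of_trivial, Function.comp] using this

lemma trace_pow_conj (d n : ℕ) (g v x : Matrix (Fin d) (Fin d) ℝ)
    (hg : g * gᵀ = 1) (hx : x = g * v * gᵀ) : (x ^ n).trace = (v ^ n).trace := by
  have hg' : gᵀ * g = 1 := mul_eq_one_comm.mp hg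
  have hpow : ∀ m, x ^ m = g * v ^ m * gᵀ := by
    intro m
    induction m with
    | zero => rw [pow_zero, pow_zero, mul_one, hg]
    | succ m ih =>
      rw [pow_succ, ih, hx, pow_succ]
      calc g * v ^ m * gᵀ * (g * v * gᵀ) = g * v ^ m * (gᵀ * g) * v * gᵀ := by
            noncomm_ring
        _ = g * (v ^ m * v) * gᵀ := by rw [hg']; noncomm_ring
  rw [hpow n, trace_mul_cycle, hg', one_mul]

lemma eval_aeval' {σ τ : Type*} (f : σ → MvPolynomial τ ℝ) (v : τ → ℝ) (p : MvPolynomial σ ℝ) :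
    eval v (aeval f p) = eval (fun i => eval v (f i)) p := by
  induction p using MvPolynomial.induction_on with
  | C r => simp [aeval_C]
  | add p q hp hq => simp only [map_add, hp, hq]
  | mul_X p i hp => simp only [_root_.map_mul, hp, aeval_X, eval_X]

/-- A rotation-invariant polynomial function on the real `d × d` symmetric matrices is a
polynomial in the traces of the first `d` powers. -/
theorem rotation_invariant_polynomial_eq_poly_of_traces
    (d : ℕ) (F : Matrix (Fin d) (Fin d) ℝ → ℝ)
    (hpoly : ∃ P : MvPolynomial (Fin d × Fin d) ℝ,
      ∀ x : Matrix (Fin d) (Fin d) ℝ, x.IsSymm →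
        F x = MvPolynomial.eval (fun ij => x ij.1 ij.2) P)
    (hinv : ∀ g x : Matrix (Fin d) (Fin d) ℝ, g * gᵀ = 1 → x.IsSymm →
      F (g * x * gᵀ) = F x) :
    ∃ p : MvPolynomial (Fin d) ℝ,
      ∀ x : Matrix (Fin d) (Fin d) ℝ, x.IsSymm →
        F x = MvPolynomial.eval (fun k : Fin d => (x ^ ((k : ℕ) + 1)).trace) p := by
  obtain ⟨P, hP⟩ := hpoly
  set Q : MvPolynomial (Fin d) ℝ :=
    aeval (fun ij : Fin d × Fin d => if ij.1 = ij.2 then X ij.1 else 0) P with hQdef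
  have hQeval : ∀ v : Fin d → ℝ, eval v Q = F (diagonal v) := by
    intro v
    rw [hP (diagonal v) (isSymm_diagonal v), hQdef, eval_aeval']
    have harg : (fun ij : Fin d × Fin d => eval v (if ij.1 = ij.2 then X ij.1 else 0))
        = fun ij : Fin d × Fin d => diagonal v ij.1 ij.2 := by
      funext ij
      by_cases h : ij.1 = ij.2 <;> simp [diagonal_apply, h]
    rw [harg]
  have hQsymm : Q.IsSymmetric := by
    intro e
    apply MvPolynomial.funext
    intro v
    rw [eval_rename, hQeval]
    have : (fun i => v (e i)) = v ∘ e := rfl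
    rw [show ((v ∘ ⇑e)) = (v ∘ e) from rfl] at *
    obtain ⟨g, hg, hconj⟩ := perm_conj d e v
    rw [hQeval, show diagonal (v ∘ ⇑e) = g * diagonal v * gᵀ from hconj.symm]
    exact hinv g (diagonal v) hg (isSymm_diagonal v)
  obtain ⟨p, hp⟩ := isSymmetric_mem_psum_range d Q hQsymm
  refine ⟨p, fun x hx => ?_⟩
  obtain ⟨g, v, hg, hxe⟩ := spectral d x hx
  have h1 : F x = eval v Q := by
    rw [hQeval v, hxe]
    exact hinv g (diagonal v) hg (isSymm_diagonal v)
  rw [h1, hp, psumHom, eval_aeval']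
  have harg : (fun i : Fin d => eval v (psum (Fin d) ℝ ((i : ℕ) + 1)))
      = fun k : Fin d => (x ^ ((k : ℕ) + 1)).trace := by
    funext k
    rw [show (x ^ ((k : ℕ) + 1)).trace = ((diagonal v) ^ ((k : ℕ) + 1)).trace from
      trace_pow_conj d _ g (diagonal v) x hg hxe, diagonal_pow, trace_diagonal]
    simp [psum]
  rw [harg]
end

section
/- Let F be a rotation-invariant function on ℝ^d (invariant under the orthogonal group) whose restriction f(r) = F(r e₁) to a coordinate axis is C^n. Then F is C^n on all of ℝ^d. -/
open Set Filter Topology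


/-- Key extension lemma: a function which is `C^k` away from `0`, vanishes at `0`, and whose
iterated derivatives are `o(‖x‖^(k-j))` near `0`, is `C^k` everywhere. -/
theorem aux_contDiff_of_flat (k : ℕ) {E W : Type} [NormedAddCommGroup E] [NormedSpace ℝ E]
    [iW1 : NormedAddCommGroup W] [iW2 : NormedSpace ℝ W] (g : E → W)
    (hg : ContDiffOn ℝ k g ({0}ᶜ : Set E))
    (h0 : g 0 = 0)
    (hb : ∀ j, j ≤ k → Tendsto
      (fun x : E => ‖iteratedFDerivWithin ℝ j g ({0}ᶜ : Set E) x‖ / ‖x‖ ^ (k - j))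
      (𝓝[≠] (0 : E)) (𝓝 0)) :
    ContDiff ℝ k g := by
  induction k generalizing W iW1 iW2 g with
  | zero =>
    have : Continuous g := by
      rw [continuous_iff_continuousAt]
      intro x
      rcases eq_or_ne x 0 with rfl | hx
      · have h := hb 0 le_rfl
        simp only [Nat.sub_zero, pow_zero, div_one, norm_iteratedFDerivWithin_zero] at h
        have hp : Tendsto (fun x : E => ‖g x‖) (pure (0 : E)) (𝓝 (0 : ℝ)) := by
          simpa [h0] using
            (tendsto_pure_pure (fun x : E => ‖g x‖) (0 : E)).mono_right (pure_le_nhds _)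
        have h' : Tendsto (fun x : E => ‖g x‖) (𝓝 (0 : E)) (𝓝 0) := by
          rw [← nhdsNE_sup_pure (0 : E), tendsto_sup]
          exact ⟨h, hp⟩
        have : Tendsto g (𝓝 (0 : E)) (𝓝 (0 : W)) :=
          tendsto_zero_iff_norm_tendsto_zero.2 h'
        simpa [ContinuousAt, h0] using this
      · exact (hg.continuousOn.continuousAt (isOpen_compl_singleton.mem_nhds hx))
    simpa [contDiff_zero] using this
  | succ k IH =>
    have hso : IsOpen ({0}ᶜ : Set E) := isOpen_compl_singleton
    have hsu : UniqueDiffOn ℝ ({0}ᶜ : Set E) := hso.uniqueDiffOn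
    -- level-0 bound
    have hb0 := hb 0 (Nat.zero_le _)
    simp only [Nat.sub_zero, norm_iteratedFDerivWithin_zero] at hb0
    have hnorm : Tendsto (fun x : E => ‖x‖ ^ k) (𝓝[≠] (0 : E)) (𝓝 (‖(0 : E)‖ ^ k)) :=
      ((continuous_norm.pow k).tendsto (0 : E)).mono_left nhdsWithin_le_nhds
    have hb0' : Tendsto (fun x : E => ‖g x‖ / ‖x‖) (𝓝[≠] (0 : E)) (𝓝 0) := by
      have hmul := hb0.mul hnorm
      rw [norm_zero, zero_mul] at hmul
      apply hmul.congr'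
      filter_upwards [self_mem_nhdsWithin] with x hx
      have hxn : ‖x‖ ≠ 0 := norm_ne_zero_iff.2 hx
      rw [pow_succ, div_mul_eq_mul_div, mul_comm (‖g x‖), mul_div_mul_left _ _ (pow_ne_zero k hxn)]
    -- derivative at 0
    have hdiff0 : HasFDerivAt g (0 : E →L[ℝ] W) 0 := by
      rw [hasFDerivAt_iff_tendsto]
      have h1 : Tendsto (fun x : E => ‖x‖⁻¹ * ‖g x‖) (𝓝[≠] (0 : E)) (𝓝 0) := by
        apply hb0'.congr'
        filter_upwards with x
        rw [div_eq_inv_mul]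
      have hp : Tendsto (fun x : E => ‖x‖⁻¹ * ‖g x‖) (pure (0 : E)) (𝓝 (0 : ℝ)) := by
        simpa [h0] using
          (tendsto_pure_pure (fun x : E => ‖x‖⁻¹ * ‖g x‖) (0 : E)).mono_right (pure_le_nhds _)
      have h2 : Tendsto (fun x : E => ‖x‖⁻¹ * ‖g x‖) (𝓝 (0 : E)) (𝓝 0) := by
        rw [← nhdsNE_sup_pure (0 : E), tendsto_sup]
        exact ⟨h1, hp⟩
      simpa [h0] using h2
    have hone : (1 : WithTop ℕ∞) ≤ ((k + 1 : ℕ) : WithTop ℕ∞) := by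
      exact_mod_cast Nat.succ_le_succ (Nat.zero_le k)
    have hdiff : Differentiable ℝ g := by
      intro x
      rcases eq_or_ne x 0 with rfl | hx
      · exact hdiff0.differentiableAt
      · exact ((hg.differentiableOn (lt_of_lt_of_le zero_lt_one hone).ne').differentiableAt (hso.mem_nhds hx))
    -- the derivative function
    have hEq : EqOn (fderiv ℝ g) (fderivWithin ℝ g ({0}ᶜ : Set E)) ({0}ᶜ : Set E) :=
      fun x hx => (fderivWithin_of_isOpen hso hx).symm
    have hg'ContOn : ContDiffOn ℝ k (fderiv ℝ g) ({0}ᶜ : Set E) := by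
      apply hg.fderiv_of_isOpen hso
      exact_mod_cast le_rfl
    have h0' : fderiv ℝ g 0 = 0 := hdiff0.fderiv
    have hb' : ∀ j, j ≤ k → Tendsto
        (fun x : E => ‖iteratedFDerivWithin ℝ j (fderiv ℝ g) ({0}ᶜ : Set E) x‖ / ‖x‖ ^ (k - j))
        (𝓝[≠] (0 : E)) (𝓝 0) := by
      intro j hj
      have h2 := hb (j + 1) (Nat.succ_le_succ hj)
      rw [Nat.succ_sub_succ] at h2
      apply h2.congr'
      filter_upwards [self_mem_nhdsWithin] with x hx
      rw [iteratedFDerivWithin_congr hEq hx, norm_iteratedFDerivWithin_fderivWithin hsu hx]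
    have hg' : ContDiff ℝ k (fderiv ℝ g) := IH (fderiv ℝ g) hg'ContOn h0' hb'
    have hcast : ((k + 1 : ℕ) : WithTop ℕ∞) = ((k : ℕ) : WithTop ℕ∞) + 1 := by
      push_cast
      rfl
    rw [hcast, contDiff_succ_iff_fderiv]
    refine ⟨hdiff, ?_, hg'⟩
    intro hω
    simp at hω
/-- A `C^m` function all of whose derivatives up to order `m` vanish at `0` is `o(r^m)` at `0⁺`. -/
theorem aux_flat_tendsto (m : ℕ) (φ : ℝ → ℝ) (hφ : ContDiff ℝ m φ)
    (hz : ∀ j, j ≤ m → iteratedDeriv j φ 0 = 0) :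
    Tendsto (fun r => φ r / r ^ m) (𝓝[>] (0 : ℝ)) (𝓝 0) := by
  induction m generalizing φ with
  | zero =>
    simp only [pow_zero, div_one]
    have h0 : φ 0 = 0 := by simpa using hz 0 le_rfl
    have : Tendsto φ (𝓝[>] (0:ℝ)) (𝓝 (φ 0)) :=
      (hφ.continuous.tendsto 0).mono_left nhdsWithin_le_nhds
    simpa [h0] using this
  | succ m IH =>
    have hφcast : ContDiff ℝ (((m : ℕ) : WithTop ℕ∞) + 1) φ := by
      have : ((m + 1 : ℕ) : WithTop ℕ∞) = ((m : ℕ) : WithTop ℕ∞) + 1 := by push_cast; rfl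
      rw [← this]; exact hφ
    have hφ' : ContDiff ℝ m (deriv φ) := (contDiff_succ_iff_deriv.mp hφcast).2.2
    have hz' : ∀ j, j ≤ m → iteratedDeriv j (deriv φ) 0 = 0 := by
      intro j hj
      rw [← iteratedDeriv_succ']
      exact hz (j + 1) (Nat.succ_le_succ hj)
    have hIH := IH (deriv φ) hφ' hz'
    apply HasDerivAt.lhopital_zero_nhdsGT (f' := deriv φ)
      (g' := fun x : ℝ => ((m + 1 : ℕ) : ℝ) * x ^ m)
    · filter_upwards with x
      exact ((hφ.differentiable (by simp)) x).hasDerivAt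
    · filter_upwards with x
      simpa using hasDerivAt_pow (m + 1) x
    · filter_upwards [self_mem_nhdsWithin] with x hx
      have hx' : (0 : ℝ) < x := hx
      positivity
    · have h0 : φ 0 = 0 := by simpa using hz 0 (Nat.zero_le _)
      have : Tendsto φ (𝓝[>] (0:ℝ)) (𝓝 (φ 0)) :=
        (hφ.continuous.tendsto 0).mono_left nhdsWithin_le_nhds
      simpa [h0] using this
    · have : Tendsto (fun x : ℝ => x ^ (m + 1)) (𝓝 (0 : ℝ)) (𝓝 ((0 : ℝ) ^ (m + 1))) :=
        (continuous_pow (m + 1)).tendsto 0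
      simpa using this.mono_left nhdsWithin_le_nhds
    · have h := hIH.div_const ((m + 1 : ℕ) : ℝ)
      rw [zero_div] at h
      apply h.congr'
      filter_upwards with x
      rw [div_div, mul_comm]
theorem aux_iteratedDeriv_poly (N : ℕ) (c : ℕ → ℝ) (j : ℕ) :
    iteratedDeriv j (fun t : ℝ => ∑ i ∈ Finset.range N, c i * t ^ i) =
      fun t => ∑ i ∈ Finset.range N, c i * ((i.descFactorial j : ℝ) * t ^ (i - j)) := by
  induction j with
  | zero => simp
  | succ j IH =>
    rw [iteratedDeriv_succ, IH]
    funext t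
    rw [deriv_fun_sum (fun i _ => ((differentiableAt_pow _).const_mul _).const_mul _)]
    refine Finset.sum_congr rfl fun i _ => ?_
    rw [deriv_const_mul _ ((differentiableAt_pow _).const_mul _),
      deriv_const_mul _ (differentiableAt_pow _), deriv_pow_field, Nat.descFactorial_succ,
      Nat.cast_mul, ← Nat.sub_sub]
    ring

theorem aux_iteratedDeriv_poly_zero {N j : ℕ} (hj : j < N) (c : ℕ → ℝ) :
    iteratedDeriv j (fun t : ℝ => ∑ i ∈ Finset.range N, c i * t ^ i) 0 =
      (j.factorial : ℝ) * c j := by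
  rw [aux_iteratedDeriv_poly]
  simp only
  rw [Finset.sum_eq_single j]
  · rw [Nat.descFactorial_self, Nat.sub_self, pow_zero]
    ring
  · intro i hi hne
    rcases lt_or_gt_of_ne hne with h | h
    · rw [Nat.descFactorial_eq_zero_iff_lt.2 h]
      simp
    · rw [zero_pow (Nat.sub_ne_zero_of_lt h)]
      simp
  · intro h
    exact absurd (Finset.mem_range.2 hj) h
/-- A rotation-invariant function on `ℝ^d` whose restriction to the first coordinate axis is
`C^n` is itself `C^n`. -/
theorem rotation_invariant_contDiff_of_axis_restriction
    (d n : ℕ) (hd : 0 < d) (F : EuclideanSpace ℝ (Fin d) → ℝ)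
    (hinv : ∀ g : EuclideanSpace ℝ (Fin d) ≃ₗᵢ[ℝ] EuclideanSpace ℝ (Fin d),
      ∀ x, F (g x) = F x)
    (hax : ContDiff ℝ n fun t : ℝ =>
      F (t • EuclideanSpace.single (⟨0, hd⟩ : Fin d) (1 : ℝ))) :
    ContDiff ℝ n F := by
  classical
  set e1 : EuclideanSpace ℝ (Fin d) := EuclideanSpace.single (⟨0, hd⟩ : Fin d) (1 : ℝ) with he1
  set f : ℝ → ℝ := fun t => F (t • e1) with hfdef
  have hfC : ContDiff ℝ n f := hax
  have he1norm : ‖e1‖ = 1 := by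
    rw [he1, EuclideanSpace.norm_single]
    norm_num
  -- F is radial
  have hkey : ∀ x : EuclideanSpace ℝ (Fin d), F x = f ‖x‖ := by
    intro x
    have hy : ‖x‖ = ‖(‖x‖ • e1)‖ := by
      rw [norm_smul, he1norm, mul_one, Real.norm_eq_abs, abs_norm]
    have hrefl := Submodule.reflection_sub hy
    have h2 := hinv (Submodule.reflection (ℝ ∙ (x - ‖x‖ • e1))ᗮ) x
    rw [hrefl] at h2
    exact h2.symm
  -- f is even
  have heven : ∀ t, f (-t) = f t := by
    intro t
    have := hinv (LinearIsometryEquiv.neg ℝ) (t • e1)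
    simpa [hfdef, neg_smul] using this
  have hodd : ∀ j, Odd j → iteratedDeriv j f 0 = 0 := by
    intro j hj
    have hc : (fun x => f (-x)) = f := funext heven
    have h := iteratedDeriv_comp_neg j f 0
    rw [hc, neg_zero] at h
    rcases hj with ⟨m, rfl⟩
    have hpow : ((-1 : ℝ) ^ (2 * m + 1)) = -1 := Odd.neg_one_pow ⟨m, by ring⟩
    rw [hpow] at h
    have : iteratedDeriv (2 * m + 1) f 0 = -iteratedDeriv (2 * m + 1) f 0 := by
      simpa using h
    linarith
  -- Taylor coefficients
  set c : ℕ → ℝ := fun i => iteratedDeriv i f 0 / (i.factorial : ℝ) with hcdef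
  have hcodd : ∀ i, Odd i → c i = 0 := fun i hi => by simp [hcdef, hodd i hi]
  set p : ℝ → ℝ := fun t => ∑ i ∈ Finset.range (n + 1), c i * t ^ i with hpdef
  set R : ℝ → ℝ := fun t => f t - p t with hRdef
  have hpC : ∀ N : WithTop ℕ∞, ContDiff ℝ N p := by
    intro N
    apply ContDiff.sum
    intro i _
    exact contDiff_const.mul (contDiff_id.pow i)
  have hRC : ContDiff ℝ n R := hfC.sub (hpC _)
  have hflat : ∀ j, j ≤ n → iteratedDeriv j R 0 = 0 := by
    intro j hj
    have hsub : iteratedDeriv j R 0 = iteratedDeriv j f 0 - iteratedDeriv j p 0 := by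
      have h := iteratedDerivWithin_sub (Set.mem_univ (0 : ℝ)) uniqueDiffOn_univ
        ((hfC.of_le (by exact_mod_cast hj)).contDiffWithinAt) ((hpC j).contDiffWithinAt)
      simp only [iteratedDerivWithin_univ] at h
      exact h
    rw [hsub, hpdef, aux_iteratedDeriv_poly_zero (Nat.lt_succ_of_le hj), hcdef]
    have : (j.factorial : ℝ) ≠ 0 := by exact_mod_cast j.factorial_ne_zero
    field_simp
    ring
  -- the smooth polynomial part
  have hQC : ContDiff ℝ n (fun x : EuclideanSpace ℝ (Fin d) => ∑ i ∈ Finset.range (n + 1), c i * ‖x‖ ^ i) := by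
    apply ContDiff.sum
    intro i _
    rcases Nat.even_or_odd i with he | ho
    · obtain ⟨m, rfl⟩ := he
      have heq : (fun x : EuclideanSpace ℝ (Fin d) => c (m + m) * ‖x‖ ^ (m + m))
          = fun x : EuclideanSpace ℝ (Fin d) => c (m + m) * (‖x‖ ^ 2) ^ m := by
        funext x
        rw [← pow_mul, two_mul]
      rw [heq]
      exact contDiff_const.mul ((contDiff_norm_sq ℝ).pow m)
    · have : c i = 0 := hcodd i ho
      rw [this]
      simpa using contDiff_const
  -- decomposition
  have hFeq : F = fun x : EuclideanSpace ℝ (Fin d) => (∑ i ∈ Finset.range (n + 1), c i * ‖x‖ ^ i) + R ‖x‖ := by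
    funext x
    rw [hkey x, hRdef, hpdef]
    simp
  have hgC : ContDiff ℝ n (fun x : EuclideanSpace ℝ (Fin d) => R ‖x‖) := by
    have hso : IsOpen ({0}ᶜ : Set (EuclideanSpace ℝ (Fin d))) := isOpen_compl_singleton
    have hsu : UniqueDiffOn ℝ ({0}ᶜ : Set (EuclideanSpace ℝ (Fin d))) := hso.uniqueDiffOn
    have hgOn : ContDiffOn ℝ n (fun x : EuclideanSpace ℝ (Fin d) => R ‖x‖)
        ({0}ᶜ : Set (EuclideanSpace ℝ (Fin d))) := by
      intro x hx
      exact (hRC.contDiffAt.comp x (contDiffAt_norm ℝ (by simpa using hx))).contDiffWithinAt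
    set A : ℝ → ℝ := fun r => ∑ i ∈ Finset.range (n + 1), |iteratedDeriv i R r| / r ^ (n - i)
      with hAdef
    have hA : Tendsto A (𝓝[>] (0:ℝ)) (𝓝 0) := by
      have hterm : ∀ i ∈ Finset.range (n+1),
          Tendsto (fun r => |iteratedDeriv i R r| / r ^ (n - i)) (𝓝[>] (0:ℝ)) (𝓝 0) := by
        intro i hi
        have hi' : i ≤ n := Nat.lt_succ_iff.mp (Finset.mem_range.mp hi)
        have hCD : ContDiff ℝ (n - i) (iteratedDeriv i R) := by
          rw [iteratedDeriv_eq_iterate]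
          apply ContDiff.iterate_deriv' (n - i) i
          rwa [Nat.sub_add_cancel hi']
        have hfl : ∀ j, j ≤ n - i → iteratedDeriv j (iteratedDeriv i R) 0 = 0 := by
          intro j hj
          rw [iteratedDeriv_eq_iterate, iteratedDeriv_eq_iterate, ← Function.iterate_add_apply,
            ← iteratedDeriv_eq_iterate]
          exact hflat (j + i) (by omega)
        have h := (aux_flat_tendsto (n - i) _ hCD hfl).abs
        rw [abs_zero] at h
        apply h.congr'
        filter_upwards [self_mem_nhdsWithin] with r hr
        rw [abs_div, abs_of_pos (a := r ^ (n - i)) (pow_pos hr (n - i))]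
      have := tendsto_finset_sum (Finset.range (n+1)) hterm
      simpa using this
    have hAbound : ∀ r : ℝ, 0 < r → ∀ i, i ≤ n →
        |iteratedDeriv i R r| ≤ A r * r ^ (n - i) := by
      intro r hr i hi
      have h1 : |iteratedDeriv i R r| / r ^ (n - i) ≤ A r := by
        rw [hAdef]
        apply Finset.single_le_sum (f := fun i => |iteratedDeriv i R r| / r ^ (n - i))
        · intro j _
          positivity
        · exact Finset.mem_range.2 (Nat.lt_succ_of_le hi)
      calc |iteratedDeriv i R r|
          = |iteratedDeriv i R r| / r ^ (n - i) * r ^ (n - i) := by field_simp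
        _ ≤ A r * r ^ (n - i) := mul_le_mul_of_nonneg_right h1 (by positivity)
    have hnormC : ContDiffOn ℝ n (fun x : EuclideanSpace ℝ (Fin d) => ‖x‖)
        ({0}ᶜ : Set (EuclideanSpace ℝ (Fin d))) := by
      intro x hx
      exact (contDiffAt_norm ℝ (by simpa using hx)).contDiffWithinAt
    have hBex : ∀ i : ℕ, i ≤ n → ∃ Bi : ℝ, ∀ y ∈ Metric.sphere (0 : EuclideanSpace ℝ (Fin d)) 1,
        ‖iteratedFDerivWithin ℝ i (fun x : EuclideanSpace ℝ (Fin d) => ‖x‖)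
          ({0}ᶜ : Set (EuclideanSpace ℝ (Fin d))) y‖ ≤ Bi := by
      intro i hi
      have hco : ContinuousOn (fun y => iteratedFDerivWithin ℝ i
          (fun x : EuclideanSpace ℝ (Fin d) => ‖x‖) ({0}ᶜ : Set (EuclideanSpace ℝ (Fin d))) y)
          ({0}ᶜ : Set (EuclideanSpace ℝ (Fin d))) :=
        hnormC.continuousOn_iteratedFDerivWithin (by exact_mod_cast hi) hsu
      have hsub : Metric.sphere (0 : EuclideanSpace ℝ (Fin d)) 1 ⊆
          ({0}ᶜ : Set (EuclideanSpace ℝ (Fin d))) := by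
        intro y hy
        simp only [Metric.mem_sphere, dist_zero_right] at hy
        simp only [Set.mem_compl_iff, Set.mem_singleton_iff]
        intro h
        rw [h] at hy
        simp at hy
      exact (isCompact_sphere _ _).exists_bound_of_continuousOn (hco.mono hsub)
    choose! B hB using hBex
    set D : ℝ := 1 + ∑ i ∈ Finset.range (n+1), max (B i) 0 with hDdef
    have hD1 : (1:ℝ) ≤ D := by
      have : (0:ℝ) ≤ ∑ i ∈ Finset.range (n+1), max (B i) 0 :=
        Finset.sum_nonneg fun i _ => le_max_right _ _
      rw [hDdef]; linarith
    have hDB : ∀ i, i ≤ n → B i ≤ D := by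
      intro i hi
      have h1 : max (B i) 0 ≤ ∑ i ∈ Finset.range (n+1), max (B i) 0 :=
        Finset.single_le_sum (f := fun k => max (B k) 0) (fun j _ => le_max_right _ _)
          (Finset.mem_range.2 (Nat.lt_succ_of_le hi))
      have h2 := le_max_left (B i) 0
      rw [hDdef]; linarith
    -- main pointwise bound
    have hmain : ∀ j, j ≤ n → ∀ x : EuclideanSpace ℝ (Fin d), x ≠ 0 →
        ‖iteratedFDerivWithin ℝ j (fun x : EuclideanSpace ℝ (Fin d) => R ‖x‖)
          ({0}ᶜ : Set (EuclideanSpace ℝ (Fin d))) x‖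
        ≤ ((j.factorial : ℝ) * D ^ j) * A ‖x‖ * ‖x‖ ^ (n - j) := by
      intro j hj x hx
      have hr : 0 < ‖x‖ := norm_pos_iff.2 hx
      set r : ℝ := ‖x‖ with hrdef
      set Lr : EuclideanSpace ℝ (Fin d) ≃L[ℝ] EuclideanSpace ℝ (Fin d) :=
        (LinearEquiv.smulOfNeZero ℝ _ r hr.ne').toContinuousLinearEquiv with hLrdef
      have hLr_apply : ∀ y, Lr y = r • y := fun y => rfl
      have hLr_pre : (Lr ⁻¹' ({0}ᶜ : Set (EuclideanSpace ℝ (Fin d))))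
          = ({0}ᶜ : Set (EuclideanSpace ℝ (Fin d))) := by
        ext y
        simp [hLr_apply, smul_eq_zero, hr.ne']
      set u : EuclideanSpace ℝ (Fin d) := r⁻¹ • x with hudef
      have hu_norm : ‖u‖ = 1 := by
        rw [hudef, norm_smul, norm_inv, norm_norm]
        field_simp
      have hu_ne : u ≠ 0 := by
        intro h
        rw [h] at hu_norm
        simp at hu_norm
      have hu_s : u ∈ ({0}ᶜ : Set (EuclideanSpace ℝ (Fin d))) := by simpa using hu_ne
      have hLru : Lr u = x := by rw [hLr_apply, hudef, smul_inv_smul₀ hr.ne']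
      have hx_s : Lr u ∈ ({0}ᶜ : Set (EuclideanSpace ℝ (Fin d))) := by
        rw [hLru]; simpa using hx
      have hcomp := Lr.iteratedFDerivWithin_comp_right
        (fun x : EuclideanSpace ℝ (Fin d) => R ‖x‖) hsu hx_s j
      rw [hLr_pre] at hcomp
      have hsmul : (iteratedFDerivWithin ℝ j (fun x : EuclideanSpace ℝ (Fin d) => R ‖x‖)
            ({0}ᶜ : Set (EuclideanSpace ℝ (Fin d))) (Lr u)).compContinuousLinearMap
            (fun _ => (Lr : EuclideanSpace ℝ (Fin d) →L[ℝ] EuclideanSpace ℝ (Fin d)))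
          = (r ^ j) • iteratedFDerivWithin ℝ j (fun x : EuclideanSpace ℝ (Fin d) => R ‖x‖)
            ({0}ᶜ : Set (EuclideanSpace ℝ (Fin d))) (Lr u) := by
        apply ContinuousMultilinearMap.ext
        intro m
        rw [ContinuousMultilinearMap.compContinuousLinearMap_apply,
          ContinuousMultilinearMap.smul_apply]
        have hm : (fun i => (Lr : EuclideanSpace ℝ (Fin d) →L[ℝ] EuclideanSpace ℝ (Fin d)) (m i))
            = fun i => r • (m i) := by
          funext i
          exact hLr_apply (m i)
        rw [hm, ContinuousMultilinearMap.map_smul_univ]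
        simp [smul_smul]
      have hnormcomp : ‖iteratedFDerivWithin ℝ j ((fun x : EuclideanSpace ℝ (Fin d) => R ‖x‖) ∘ Lr)
            ({0}ᶜ : Set (EuclideanSpace ℝ (Fin d))) u‖
          = r ^ j * ‖iteratedFDerivWithin ℝ j (fun x : EuclideanSpace ℝ (Fin d) => R ‖x‖)
            ({0}ᶜ : Set (EuclideanSpace ℝ (Fin d))) x‖ := by
        rw [hcomp, hsmul, norm_smul, hLru]
        rw [Real.norm_eq_abs, abs_of_pos (pow_pos hr j)]
      -- Faa di Bruno
      have hfun : ((fun x : EuclideanSpace ℝ (Fin d) => R ‖x‖) ∘ Lr)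
          = (fun t : ℝ => R (r * t)) ∘ (fun y : EuclideanSpace ℝ (Fin d) => ‖y‖) := by
        funext y
        simp only [Function.comp_apply, hLr_apply]
        rw [norm_smul, Real.norm_eq_abs, abs_of_pos hr]
      have hRr : ContDiffOn ℝ n (fun t : ℝ => R (r * t)) (Ioi (0:ℝ)) :=
        (hRC.comp (contDiff_const.mul contDiff_id)).contDiffOn
      have hC : ∀ i, i ≤ j → ‖iteratedFDerivWithin ℝ i (fun t : ℝ => R (r * t)) (Ioi (0:ℝ))
          ((fun y : EuclideanSpace ℝ (Fin d) => ‖y‖) u)‖ ≤ A r * r ^ n := by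
        intro i hi
        have hin : i ≤ n := le_trans hi hj
        have h1mem : (1:ℝ) ∈ Ioi (0:ℝ) := by norm_num
        simp only [hu_norm]
        rw [iteratedFDerivWithin_of_isOpen i isOpen_Ioi h1mem,
          norm_iteratedFDeriv_eq_norm_iteratedDeriv,
          iteratedDeriv_comp_const_mul (n := i) (hRC.of_le (by exact_mod_cast hin)) r]
        simp only [mul_one]
        rw [Real.norm_eq_abs, abs_mul, abs_of_pos (pow_pos hr i)]
        calc r ^ i * |iteratedDeriv i R r| ≤ r ^ i * (A r * r ^ (n - i)) := by
              apply mul_le_mul_of_nonneg_left (hAbound r hr i hin) (by positivity)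
          _ = A r * r ^ n := by
              have hrn : r ^ n = r ^ i * r ^ (n - i) := by
                rw [← pow_add, Nat.add_sub_cancel' hin]
              rw [hrn]
              ring
      have hD' : ∀ i, 1 ≤ i → i ≤ j → ‖iteratedFDerivWithin ℝ i
          (fun y : EuclideanSpace ℝ (Fin d) => ‖y‖)
          ({0}ᶜ : Set (EuclideanSpace ℝ (Fin d))) u‖ ≤ D ^ i := by
        intro i h1 hi
        have hBu := hB i (le_trans hi hj) u (by
          simp only [Metric.mem_sphere, dist_zero_right]
          exact hu_norm)
        calc ‖iteratedFDerivWithin ℝ i (fun y : EuclideanSpace ℝ (Fin d) => ‖y‖)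
              ({0}ᶜ : Set (EuclideanSpace ℝ (Fin d))) u‖ ≤ B i := hBu
          _ ≤ D := hDB i (le_trans hi hj)
          _ ≤ D ^ i := le_self_pow₀ hD1 (Nat.one_le_iff_ne_zero.mp h1)
      have hmaps : MapsTo (fun y : EuclideanSpace ℝ (Fin d) => ‖y‖)
          ({0}ᶜ : Set (EuclideanSpace ℝ (Fin d))) (Ioi (0:ℝ)) := by
        intro y hy
        exact norm_pos_iff.2 (by simpa using hy)
      have hfaa := norm_iteratedFDerivWithin_comp_le (𝕜 := ℝ)
        hRr hnormC (by exact_mod_cast hj : (j : WithTop ℕ∞) ≤ (n : ℕ))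
        isOpen_Ioi.uniqueDiffOn hsu hmaps hu_s hC hD'
      rw [← hfun] at hfaa
      rw [hnormcomp] at hfaa
      -- conclude
      have hgoal : ‖iteratedFDerivWithin ℝ j (fun x : EuclideanSpace ℝ (Fin d) => R ‖x‖)
            ({0}ᶜ : Set (EuclideanSpace ℝ (Fin d))) x‖ * r ^ j
          ≤ (((j.factorial : ℝ) * D ^ j) * A r * r ^ (n - j)) * r ^ j := by
        calc ‖iteratedFDerivWithin ℝ j (fun x : EuclideanSpace ℝ (Fin d) => R ‖x‖)
              ({0}ᶜ : Set (EuclideanSpace ℝ (Fin d))) x‖ * r ^ j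
            ≤ (j.factorial : ℝ) * (A r * r ^ n) * D ^ j := by
              rw [mul_comm] at hfaa; exact hfaa
          _ = (((j.factorial : ℝ) * D ^ j) * A r * r ^ (n - j)) * r ^ j := by
              have hrn : r ^ n = r ^ (n - j) * r ^ j := by
                rw [← pow_add, Nat.sub_add_cancel hj]
              rw [hrn]
              ring
      exact le_of_mul_le_mul_right hgoal (pow_pos hr j)
    -- the tendsto hypothesis
    have hbb : ∀ j, j ≤ n → Tendsto
        (fun x : EuclideanSpace ℝ (Fin d) => ‖iteratedFDerivWithin ℝ j
          (fun x : EuclideanSpace ℝ (Fin d) => R ‖x‖)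
          ({0}ᶜ : Set (EuclideanSpace ℝ (Fin d))) x‖ / ‖x‖ ^ (n - j))
        (𝓝[≠] (0 : EuclideanSpace ℝ (Fin d))) (𝓝 0) := by
      intro j hj
      have hnt : Tendsto (fun x : EuclideanSpace ℝ (Fin d) => ‖x‖)
          (𝓝[≠] (0 : EuclideanSpace ℝ (Fin d))) (𝓝[>] (0:ℝ)) := by
        rw [tendsto_nhdsWithin_iff]
        constructor
        · simpa using (continuous_norm.tendsto (0 : EuclideanSpace ℝ (Fin d))).mono_left
            nhdsWithin_le_nhds
        · filter_upwards [self_mem_nhdsWithin] with x hx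
          exact norm_pos_iff.2 (by simpa using hx)
      have hlim : Tendsto (fun x : EuclideanSpace ℝ (Fin d) =>
          ((j.factorial : ℝ) * D ^ j) * A ‖x‖)
          (𝓝[≠] (0 : EuclideanSpace ℝ (Fin d))) (𝓝 0) := by
        have := (hA.comp hnt).const_mul ((j.factorial : ℝ) * D ^ j)
        simpa using this
      apply squeeze_zero'
      · filter_upwards with x
        positivity
      · filter_upwards [self_mem_nhdsWithin] with x hx
        have hx' : x ≠ 0 := by simpa using hx
        have h := hmain j hj x hx'
        rw [div_le_iff₀ (pow_pos (norm_pos_iff.2 hx') _)]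
        exact h
      · exact hlim
    have hg0 : (fun x : EuclideanSpace ℝ (Fin d) => R ‖x‖) 0 = 0 := by
      have hR0 : R 0 = 0 := by simpa using hflat 0 (Nat.zero_le n)
      simpa using hR0
    exact aux_contDiff_of_flat n _ hgOn hg0 hbb
  rw [hFeq]
  exact hQC.add hgC
end

section
/- Let x₀ be a real d×d symmetric matrix, 𝒮 the symmetric matrices, 𝔤 the skew-symmetric matrices, 𝒮₀ the symmetric matrices commuting with x₀, and 𝔤₀ the skew-symmetric matrices commuting with x₀. Then the image of the map ad(x₀): 𝔤 → 𝒮, z ↦ [x₀,z], equals the orthogonal complement of 𝒮₀ in 𝒮, and moreover [𝔤₀^⊥, x₀] = 𝒮₀^⊥. -/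
open Matrix RealInnerProductSpace

namespace RangeAdAux

variable {d : ℕ}

noncomputable instance matCore (d : ℕ) :
    InnerProductSpace.Core ℝ (Matrix (Fin d) (Fin d) ℝ) where
  inner x y := (x * yᵀ).trace
  conj_inner_symm x y := by
    simp only [starRingEnd_apply, star_trivial]
    rw [← Matrix.trace_transpose (y * xᵀ), Matrix.transpose_mul, Matrix.transpose_transpose]
  re_inner_nonneg x := by
    simp only [RCLike.re_to_real]
    unfold Matrix.trace
    refine Finset.sum_nonneg fun i _ => ?_
    simp only [Matrix.diag_apply, Matrix.mul_apply, Matrix.transpose_apply]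
    exact Finset.sum_nonneg fun j _ => mul_self_nonneg _
  definite x h := by
    have key : ∀ i ∈ Finset.univ, (x * xᵀ).diag i = 0 := by
      unfold Matrix.trace at h
      refine (Finset.sum_eq_zero_iff_of_nonneg fun i _ => ?_).1 h
      simp only [Matrix.diag_apply, Matrix.mul_apply, Matrix.transpose_apply]
      exact Finset.sum_nonneg fun j _ => mul_self_nonneg _
    ext i j
    have hi := key i (Finset.mem_univ i)
    simp only [Matrix.diag_apply, Matrix.mul_apply, Matrix.transpose_apply] at hi
    have := (Finset.sum_eq_zero_iff_of_nonneg fun j _ => mul_self_nonneg (x i j)).1 hi j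
      (Finset.mem_univ j)
    simpa using mul_self_eq_zero.1 this
  add_left x y z := by simp [Matrix.add_mul]
  smul_left x y r := by simp

noncomputable instance matNorm (d : ℕ) : NormedAddCommGroup (Matrix (Fin d) (Fin d) ℝ) :=
  @InnerProductSpace.Core.toNormedAddCommGroup ℝ _ _ _ _ (matCore d)

noncomputable instance (d : ℕ) : InnerProductSpace ℝ (Matrix (Fin d) (Fin d) ℝ) :=
  InnerProductSpace.ofCore (matCore d).toCore

lemma inner_def (x y : Matrix (Fin d) (Fin d) ℝ) : ⟪x, y⟫ = (x * yᵀ).trace := rfl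

lemma trace_aux (x₀ s z : Matrix (Fin d) (Fin d) ℝ) (hcomm : s * x₀ = x₀ * s) :
    ((x₀ * z - z * x₀) * s).trace = 0 := by
  rw [Matrix.sub_mul, Matrix.trace_sub, Matrix.trace_mul_cycle x₀ z s, hcomm,
    Matrix.trace_mul_cycle z x₀ s, Matrix.trace_mul_cycle s z x₀, sub_self]

lemma symm_aux {x₀ z : Matrix (Fin d) (Fin d) ℝ} (hx₀ : x₀.IsSymm) (hz : zᵀ = -z) :
    (x₀ * z - z * x₀)ᵀ = x₀ * z - z * x₀ := by
  rw [Matrix.transpose_sub, Matrix.transpose_mul, Matrix.transpose_mul, hz, hx₀.eq,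
    Matrix.neg_mul, Matrix.mul_neg, sub_neg_eq_add]
  abel

/-- The Lie-bracket map `ad(x₀)` as a linear map. -/
noncomputable def adL (x₀ : Matrix (Fin d) (Fin d) ℝ) :
    Matrix (Fin d) (Fin d) ℝ →ₗ[ℝ] Matrix (Fin d) (Fin d) ℝ where
  toFun z := x₀ * z - z * x₀
  map_add' a b := by
    simp only [Matrix.mul_add, Matrix.add_mul]; abel
  map_smul' r a := by
    simp only [Matrix.mul_smul, Matrix.smul_mul, RingHom.id_apply, smul_sub]

lemma adL_symm (x₀ : Matrix (Fin d) (Fin d) ℝ) (hx₀ : x₀.IsSymm)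
    (a b : Matrix (Fin d) (Fin d) ℝ) : ⟪adL x₀ a, b⟫ = ⟪a, adL x₀ b⟫ := by
  simp only [adL, LinearMap.coe_mk, AddHom.coe_mk, inner_def]
  rw [Matrix.sub_mul, Matrix.trace_sub,
    Matrix.transpose_sub, Matrix.transpose_mul, Matrix.transpose_mul, hx₀.eq,
    Matrix.mul_sub, Matrix.trace_sub]
  rw [← Matrix.mul_assoc, ← Matrix.mul_assoc, Matrix.trace_mul_cycle a bᵀ x₀]

lemma range_adL (x₀ : Matrix (Fin d) (Fin d) ℝ) (hx₀ : x₀.IsSymm) :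
    LinearMap.range (adL x₀) = (LinearMap.ker (adL (d := d) x₀))ᗮ := by
  apply Submodule.eq_of_le_of_finrank_eq
  · rintro _ ⟨z, rfl⟩
    rw [Submodule.mem_orthogonal]
    intro u hu
    rw [← adL_symm x₀ hx₀ u z, LinearMap.mem_ker.1 hu, inner_zero_left]
  · have h1 := LinearMap.finrank_range_add_finrank_ker (adL (d := d) x₀)
    have h2 := Submodule.finrank_add_finrank_orthogonal (LinearMap.ker (adL (d := d) x₀))
    omega

/-- Skew-symmetric matrices commuting with `x₀`, as a submodule. -/
noncomputable def g0 (x₀ : Matrix (Fin d) (Fin d) ℝ) :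
    Submodule ℝ (Matrix (Fin d) (Fin d) ℝ) where
  carrier := {w | wᵀ = -w ∧ w * x₀ = x₀ * w}
  add_mem' := by
    rintro a b ⟨ha1, ha2⟩ ⟨hb1, hb2⟩
    exact ⟨by rw [Matrix.transpose_add, ha1, hb1]; abel,
      by rw [Matrix.add_mul, Matrix.mul_add, ha2, hb2]⟩
  zero_mem' := by simp
  smul_mem' := by
    rintro c a ⟨ha1, ha2⟩
    exact ⟨by rw [Matrix.transpose_smul, ha1, smul_neg],
      by rw [Matrix.smul_mul, Matrix.mul_smul, ha2]⟩

lemma mem_g0 {x₀ w : Matrix (Fin d) (Fin d) ℝ} :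
    w ∈ g0 x₀ ↔ wᵀ = -w ∧ w * x₀ = x₀ * w := Iff.rfl

lemma key (x₀ : Matrix (Fin d) (Fin d) ℝ) (hx₀ : x₀.IsSymm)
    (y : Matrix (Fin d) (Fin d) ℝ) (hy : y.IsSymm)
    (h : ∀ s : Matrix (Fin d) (Fin d) ℝ, s.IsSymm → s * x₀ = x₀ * s → (y * sᵀ).trace = 0) :
    ∃ z, zᵀ = -z ∧ y = x₀ * z - z * x₀ := by
  have hy' : y ∈ (LinearMap.ker (adL (d := d) x₀))ᗮ := by
    rw [Submodule.mem_orthogonal]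
    intro u hu
    have hcomm : x₀ * u = u * x₀ := by
      have h0 := LinearMap.mem_ker.1 hu
      simp only [adL, LinearMap.coe_mk, AddHom.coe_mk] at h0
      exact sub_eq_zero.1 h0
    have hcommT : x₀ * uᵀ = uᵀ * x₀ := by
      have h1 := congrArg Matrix.transpose hcomm
      rw [Matrix.transpose_mul, Matrix.transpose_mul, hx₀.eq] at h1
      exact h1.symm
    set s := (1/2 : ℝ) • (u + uᵀ) with hs
    set w := (1/2 : ℝ) • (u - uᵀ) with hw
    have hssym : s.IsSymm := by
      rw [Matrix.IsSymm, hs, Matrix.transpose_smul, Matrix.transpose_add,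
        Matrix.transpose_transpose, add_comm]
    have hscomm : s * x₀ = x₀ * s := by
      rw [hs, Matrix.smul_mul, Matrix.mul_smul, Matrix.add_mul, Matrix.mul_add,
        ← hcomm, ← hcommT]
    have hwskew : wᵀ = -w := by
      rw [hw, Matrix.transpose_smul, Matrix.transpose_sub, Matrix.transpose_transpose,
        ← smul_neg, neg_sub]
    have h1 : (y * s).trace = 0 := by
      have := h s hssym hscomm
      rwa [hssym.eq] at this
    have h2 : (y * w).trace = 0 := by
      have t2 : (y * w).trace = ((y * w)ᵀ).trace := (Matrix.trace_transpose _).symm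
      rw [Matrix.transpose_mul, hy.eq, hwskew, Matrix.neg_mul, Matrix.trace_neg,
        Matrix.trace_mul_comm] at t2
      rw [Matrix.trace_mul_comm]
      linarith
    have husum : u = s + w := by
      rw [hs, hw, ← smul_add]
      have : u + uᵀ + (u - uᵀ) = (2 : ℝ) • u := by
        rw [two_smul]; abel
      rw [this, smul_smul]
      norm_num
    rw [inner_def, hy.eq, husum, Matrix.add_mul, Matrix.trace_add,
      Matrix.trace_mul_comm s y, Matrix.trace_mul_comm w y, h1, h2, add_zero]
  rw [← range_adL x₀ hx₀] at hy'
  obtain ⟨z0, hz0⟩ := hy'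
  simp only [adL, LinearMap.coe_mk, AddHom.coe_mk] at hz0
  have ha : x₀ * z0ᵀ - z0ᵀ * x₀ = -y := by
    have h1 := congrArg Matrix.transpose hz0
    rw [Matrix.transpose_sub, Matrix.transpose_mul, Matrix.transpose_mul, hx₀.eq, hy.eq] at h1
    rw [← h1]; abel
  refine ⟨(1/2 : ℝ) • (z0 - z0ᵀ), ?_, ?_⟩
  · rw [Matrix.transpose_smul, Matrix.transpose_sub, Matrix.transpose_transpose,
      ← smul_neg, neg_sub]
  · rw [Matrix.mul_smul, Matrix.smul_mul, Matrix.mul_sub, Matrix.sub_mul, ← smul_sub]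
    have he : x₀ * z0 - x₀ * z0ᵀ - (z0 * x₀ - z0ᵀ * x₀)
        = (x₀ * z0 - z0 * x₀) - (x₀ * z0ᵀ - z0ᵀ * x₀) := by abel
    rw [he, hz0, ha, sub_neg_eq_add, ← two_smul ℝ, smul_smul]
    norm_num

end RangeAdAux

/-- For a symmetric matrix `x₀`, the image of `ad(x₀) : 𝔤 → 𝒮` is the orthogonal complement
(in the Frobenius inner product) of the symmetric matrices commuting with `x₀`, and moreover
`[𝔤₀^⊥, x₀] = 𝒮₀^⊥`. -/
theorem range_ad_eq_orthocomplement (d : ℕ) (x₀ : Matrix (Fin d) (Fin d) ℝ)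
    (hx₀ : x₀.IsSymm) :
    ({y | ∃ z : Matrix (Fin d) (Fin d) ℝ, zᵀ = -z ∧ y = x₀ * z - z * x₀} =
      {y : Matrix (Fin d) (Fin d) ℝ | y.IsSymm ∧
        ∀ s : Matrix (Fin d) (Fin d) ℝ, s.IsSymm → s * x₀ = x₀ * s → (y * sᵀ).trace = 0}) ∧
    ({y | ∃ z : Matrix (Fin d) (Fin d) ℝ, zᵀ = -z ∧
        (∀ w : Matrix (Fin d) (Fin d) ℝ, wᵀ = -w → w * x₀ = x₀ * w → (z * wᵀ).trace = 0) ∧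
        y = z * x₀ - x₀ * z} =
      {y : Matrix (Fin d) (Fin d) ℝ | y.IsSymm ∧
        ∀ s : Matrix (Fin d) (Fin d) ℝ, s.IsSymm → s * x₀ = x₀ * s → (y * sᵀ).trace = 0}) := by
  constructor
  · ext y
    simp only [Set.mem_setOf_eq]
    constructor
    · rintro ⟨z, hz, rfl⟩
      refine ⟨RangeAdAux.symm_aux hx₀ hz, fun s hs hcomm => ?_⟩
      rw [hs.eq]
      exact RangeAdAux.trace_aux x₀ s z hcomm
    · rintro ⟨hy, h⟩
      exact RangeAdAux.key x₀ hx₀ y hy h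
  · ext y
    simp only [Set.mem_setOf_eq]
    constructor
    · rintro ⟨z, hz, -, rfl⟩
      have hrw : z * x₀ - x₀ * z = -(x₀ * z - z * x₀) := by abel
      constructor
      · show (z * x₀ - x₀ * z)ᵀ = z * x₀ - x₀ * z
        rw [hrw, Matrix.transpose_neg, RangeAdAux.symm_aux hx₀ hz]
      · intro s hs hcomm
        rw [hs.eq, hrw, Matrix.neg_mul, Matrix.trace_neg,
          RangeAdAux.trace_aux x₀ s z hcomm, neg_zero]
    · rintro ⟨hy, h⟩
      obtain ⟨z, hz, hy2⟩ := RangeAdAux.key x₀ hx₀ y hy h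
      set z' := -z with hz'
      have hz'skew : z'ᵀ = -z' := by rw [hz', Matrix.transpose_neg, hz, neg_neg]
      have hy3 : y = z' * x₀ - x₀ * z' := by
        rw [hz', Matrix.neg_mul, Matrix.mul_neg, hy2]; abel
      set z₀ := ((RangeAdAux.g0 x₀).orthogonalProjectionOnto z' : Matrix (Fin d) (Fin d) ℝ) with hz₀
      have hz₀mem : z₀ ∈ RangeAdAux.g0 x₀ := ((RangeAdAux.g0 x₀).orthogonalProjectionOnto z').2
      obtain ⟨hm1, hm2⟩ := RangeAdAux.mem_g0.1 hz₀mem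
      have horth : z' - z₀ ∈ (RangeAdAux.g0 x₀)ᗮ :=
        Submodule.sub_starProjection_mem_orthogonal z'
      refine ⟨z' - z₀, ?_, ?_, ?_⟩
      · rw [Matrix.transpose_sub, hz'skew, hm1]; abel
      · intro w hw1 hw2
        have hwmem : w ∈ RangeAdAux.g0 x₀ := RangeAdAux.mem_g0.2 ⟨hw1, hw2⟩
        rw [← RangeAdAux.inner_def, real_inner_comm]
        exact (Submodule.mem_orthogonal _ _).1 horth w hwmem
      · rw [hy3, Matrix.sub_mul, Matrix.mul_sub, hm2]
        abel
end
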